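/- Let α be a real number with α > 2, let S be a natural number with S ≥ 1, and let t > 0 be real. Then ∫₀^∞ (1 − (1 + t·y^(−α))^(−S))·y dy = (t^(2/α)/α)·Σ_{k=1}^{S} (S choose k)·Γ(k − 2/α)·Γ(S − k + 2/α)/Γ(S), where Γ is the real Gamma function. -/

import Mathlib

open MeasureTheory Real Set

lemma betaReal (a b : ℝ) (ha : 0 < a) (hb : 0 < b) :
    ∫ x in (0:ℝ)..1, x ^ (a-1) * (1-x) ^ (b-1)
      = Real.Gamma a * Real.Gamma b / Real.Gamma (a+b) := by
  have h := Complex.Gamma_mul_Gamma_eq_betaIntegral (s := (a:ℂ)) (t := (b:ℂ))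
    (by simpa using ha) (by simpa using hb)
  have hbeta : Complex.betaIntegral a b
      = ((∫ x in (0:ℝ)..1, x ^ (a-1) * (1-x) ^ (b-1) : ℝ) : ℂ) := by
    rw [Complex.betaIntegral, ← intervalIntegral.integral_ofReal]
    apply intervalIntegral.integral_congr
    intro x hx
    rw [Set.uIcc_of_le (by norm_num : (0:ℝ) ≤ 1)] at hx
    push_cast
    rw [Complex.ofReal_cpow hx.1,
      Complex.ofReal_cpow (by linarith [hx.2] : (0:ℝ) ≤ 1 - x)]
    push_cast
    ring
  rw [hbeta, ← Complex.ofReal_add, Complex.Gamma_ofReal, Complex.Gamma_ofReal,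
    Complex.Gamma_ofReal, ← Complex.ofReal_mul, ← Complex.ofReal_mul] at h
  have h' := Complex.ofReal_inj.mp h
  have hne : Real.Gamma (a+b) ≠ 0 := (Real.Gamma_pos_of_pos (by linarith)).ne'
  field_simp
  linarith [h']

lemma betaIoi (a b : ℝ) (ha : 0 < a) (hb : 0 < b) :
    ∫ u in Set.Ioi (0:ℝ), u ^ (a-1) * (1+u) ^ (-(a+b))
      = Real.Gamma a * Real.Gamma b / Real.Gamma (a+b) := by
  have himg : (fun x => x / (1-x)) '' Set.Ioo (0:ℝ) 1 = Set.Ioi 0 := by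
    ext u
    constructor
    · rintro ⟨x, hx, rfl⟩
      exact div_pos hx.1 (by linarith [hx.2])
    · intro hu
      refine ⟨u / (1+u), ⟨div_pos hu (by linarith [hu.out]), ?_⟩, ?_⟩
      · rw [div_lt_one (by linarith [hu.out])]; linarith [hu.out]
      · have h1 : (1:ℝ) + u ≠ 0 := by linarith [hu.out]
        field_simp
        ring
  have hderiv : ∀ x ∈ Set.Ioo (0:ℝ) 1,
      HasDerivWithinAt (fun x => x / (1-x)) (1/(1-x)^2) (Set.Ioo (0:ℝ) 1) x := by
    intro x hx
    have hne : (1:ℝ) - x ≠ 0 := by intro hcon; have := sub_eq_zero.mp hcon; linarith [hx.2]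
    have := (hasDerivAt_id x).div ((hasDerivAt_const x 1).sub (hasDerivAt_id x)) hne
    convert this.hasDerivWithinAt using 1
    · rfl
    · rfl
    · funext y; rfl
    · simp only [Pi.sub_apply, id]; ring
  have hinj : Set.InjOn (fun x => x / (1-x)) (Set.Ioo (0:ℝ) 1) := by
    intro x hx y hy h
    have hx1 : (1:ℝ) - x ≠ 0 := by have := hx.2; intro h'; linarith [hx.2]
    have hy1 : (1:ℝ) - y ≠ 0 := by intro h'; linarith [hy.2]
    field_simp at h
    linarith
  rw [← himg, integral_image_eq_integral_abs_deriv_smul measurableSet_Ioo hderiv hinj]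
  have hcong : ∫ x in Set.Ioo (0:ℝ) 1,
      |1/(1-x)^2| • ((x/(1-x)) ^ (a-1) * (1+x/(1-x)) ^ (-(a+b)))
      = ∫ x in Set.Ioo (0:ℝ) 1, x ^ (a-1) * (1-x) ^ (b-1) := by
    apply setIntegral_congr_fun measurableSet_Ioo
    intro x hx
    have hx0 : (0:ℝ) < x := hx.1
    have hc : (0:ℝ) < 1 - x := by linarith [hx.2]
    have e1 : (1:ℝ) + x/(1-x) = (1-x)⁻¹ := by field_simp; ring
    have e2 : ((1-x)⁻¹ : ℝ) ^ (-(a+b)) = (1-x) ^ (a+b) := by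
      rw [Real.inv_rpow hc.le, ← Real.rpow_neg hc.le, neg_neg]
    have e3 : ((x/(1-x)) : ℝ) ^ (a-1) = x ^ (a-1) * (1-x) ^ (-(a-1)) := by
      rw [div_eq_mul_inv, Real.mul_rpow hx0.le (inv_nonneg.mpr hc.le),
        Real.inv_rpow hc.le, ← Real.rpow_neg hc.le]
    have e4 : |1/(1-x)^2| = (1-x) ^ (-(2:ℝ)) := by
      rw [abs_of_pos (by positivity), Real.rpow_neg hc.le]
      norm_num [Real.rpow_two]
    dsimp only
    rw [e1, e2, e3, e4, smul_eq_mul]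
    rw [show (1-x) ^ (-(2:ℝ)) * (x ^ (a-1) * (1-x) ^ (-(a-1)) * (1-x) ^ (a+b))
        = x ^ (a-1) * ((1-x) ^ (-(2:ℝ)) * (1-x) ^ (-(a-1)) * (1-x) ^ (a+b)) by ring]
    rw [← Real.rpow_add hc, ← Real.rpow_add hc]
    congr 1
    congr 1
    ring
  rw [hcong, ← integral_Ioc_eq_integral_Ioo,
    ← intervalIntegral.integral_of_le (by norm_num : (0:ℝ) ≤ 1)]
  exact betaReal a b ha hb

lemma integrableTerm (c d : ℝ) (hc : -1 < c) (hd : 0 ≤ d) (hcd : c - d < -1) :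
    IntegrableOn (fun u : ℝ => u ^ c * (1+u) ^ (-d)) (Set.Ioi (0:ℝ)) := by
  have hcont : ContinuousOn (fun u : ℝ => u ^ c * (1+u) ^ (-d)) (Set.Ioi 0) := by
    apply ContinuousOn.mul
    · exact continuousOn_id.rpow_const fun x hx => Or.inl (ne_of_gt hx)
    · exact (continuousOn_const.add continuousOn_id).rpow_const
        fun x hx => Or.inl (by have := hx.out; dsimp; intro h; linarith)
  rw [← Set.Ioc_union_Ioi_eq_Ioi (zero_le_one : (0:ℝ) ≤ 1)]
  apply IntegrableOn.union
  · apply Integrable.mono' ((intervalIntegral.intervalIntegrable_rpow' hc).1)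
      ((hcont.mono Set.Ioc_subset_Ioi_self).aestronglyMeasurable measurableSet_Ioc)
    filter_upwards [ae_restrict_mem measurableSet_Ioc] with u hu
    have hu0 : (0:ℝ) < u := hu.1
    have h1u : (0:ℝ) ≤ 1 + u := by linarith
    rw [Real.norm_eq_abs, abs_of_nonneg
      (mul_nonneg (Real.rpow_nonneg hu0.le _) (Real.rpow_nonneg h1u _))]
    exact mul_le_of_le_one_right (Real.rpow_nonneg hu0.le _)
      (Real.rpow_le_one_of_one_le_of_nonpos (by linarith) (neg_nonpos.mpr hd))
  · apply Integrable.mono' (integrableOn_Ioi_rpow_of_lt hcd one_pos)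
      ((hcont.mono (Set.Ioi_subset_Ioi zero_le_one)).aestronglyMeasurable measurableSet_Ioi)
    filter_upwards [ae_restrict_mem measurableSet_Ioi] with u hu
    have hu0 : (0:ℝ) < u := lt_trans one_pos hu
    have h1u : (0:ℝ) ≤ 1 + u := by linarith
    rw [Real.norm_eq_abs, abs_of_nonneg
      (mul_nonneg (Real.rpow_nonneg hu0.le _) (Real.rpow_nonneg h1u _))]
    calc u ^ c * (1+u) ^ (-d) ≤ u ^ c * u ^ (-d) := by
          apply mul_le_mul_of_nonneg_left _ (Real.rpow_nonneg hu0.le _)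
          exact Real.rpow_le_rpow_of_nonpos hu0 (by linarith) (neg_nonpos.mpr hd)
      _ = u ^ (c - d) := by rw [← Real.rpow_add hu0]; ring_nf

theorem gamma_interference_exponent_integral
    (α : ℝ) (hα : 2 < α) (S : ℕ) (hS : 1 ≤ S) (t : ℝ) (ht : 0 < t) :
    ∫ y in Set.Ioi (0 : ℝ), (1 - (1 + t * y ^ (-α)) ^ (-(S : ℝ))) * y
      = (t ^ (2 / α) / α) *
          ∑ k ∈ Finset.Icc 1 S,
            (S.choose k : ℝ) * Real.Gamma (k - 2 / α) *
              Real.Gamma (S - k + 2 / α) / Real.Gamma S := by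
  have hα0 : (0:ℝ) < α := by linarith
  have hne : α ≠ 0 := ne_of_gt hα0
  have h2α : 2 / α < 1 := (div_lt_one hα0).mpr hα
  have h2α0 : 0 < 2 / α := by positivity
  set g : ℝ → ℝ := fun z => (1 - (1 + t * z) ^ (-(S:ℝ))) * z ^ (-2/α - 1) with hg
  set h : ℝ → ℝ := fun w => (1 - (1 + w) ^ (-(S:ℝ))) * w ^ (-2/α - 1) with hh
  -- step 1 : substitution z = y ^ (-α)
  have step1 : ∫ y in Set.Ioi (0:ℝ), (1 - (1 + t * y ^ (-α)) ^ (-(S : ℝ))) * y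
      = α⁻¹ * ∫ z in Set.Ioi (0:ℝ), g z := by
    rw [← integral_comp_rpow_Ioi g (neg_ne_zero.mpr hne), ← integral_const_mul]
    apply setIntegral_congr_fun measurableSet_Ioi
    intro y hy
    have hy0 : (0:ℝ) < y := hy
    have e1 : ((y:ℝ) ^ (-α)) ^ (-2/α - 1) = y ^ (α + 2) := by
      rw [← Real.rpow_mul hy0.le]
      congr 1
      field_simp
      ring
    have e2 : y ^ (-α - 1) * y ^ (α + 2) = y := by
      rw [← Real.rpow_add hy0, show -α - 1 + (α + 2) = (1:ℝ) by ring, Real.rpow_one]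
    have key : (|(-α)| * y ^ (-α - 1)) • g (y ^ (-α))
        = α * ((1 - (1 + t * y ^ (-α)) ^ (-(S:ℝ))) * y) := by
      rw [smul_eq_mul, hg]
      dsimp only
      rw [e1, abs_neg, abs_of_pos hα0]
      calc α * y ^ (-α - 1) * ((1 - (1 + t * y ^ (-α)) ^ (-(S:ℝ))) * y ^ (α + 2))
          = α * ((1 - (1 + t * y ^ (-α)) ^ (-(S:ℝ))) * (y ^ (-α - 1) * y ^ (α + 2))) := by ring
        _ = α * ((1 - (1 + t * y ^ (-α)) ^ (-(S:ℝ))) * y) := by rw [e2]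
    dsimp only
    rw [key, ← mul_assoc, inv_mul_cancel₀ hne, one_mul]
  -- step 2 : scaling w = t * z
  have step2 : ∫ z in Set.Ioi (0:ℝ), g z = t ^ (2/α) * ∫ w in Set.Ioi (0:ℝ), h w := by
    have hsc := integral_comp_mul_left_Ioi g 0 (inv_pos.mpr ht)
    rw [mul_zero] at hsc
    have hpt : ∫ x in Set.Ioi (0:ℝ), g (t⁻¹ * x)
        = t ^ (2/α + 1) * ∫ w in Set.Ioi (0:ℝ), h w := by
      rw [← integral_const_mul]
      apply setIntegral_congr_fun measurableSet_Ioi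
      intro x hx
      have hx0 : (0:ℝ) < x := hx
      rw [hg, hh]
      dsimp only
      have e1 : t * (t⁻¹ * x) = x := by field_simp
      have e2 : (t⁻¹ * x) ^ (-2/α - 1) = t ^ (2/α + 1) * x ^ (-2/α - 1) := by
        rw [Real.mul_rpow (inv_nonneg.mpr ht.le) hx0.le, Real.inv_rpow ht.le,
          ← Real.rpow_neg ht.le]
        congr 2
        ring
      rw [e1, e2]
      ring
    rw [smul_eq_mul, inv_inv, hpt] at hsc
    have ht' : t ≠ 0 := ne_of_gt ht
    have hgover : ∫ z in Set.Ioi (0:ℝ), g z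
        = t⁻¹ * (t ^ (2/α + 1) * ∫ w in Set.Ioi (0:ℝ), h w) := by
      rw [hsc]
      field_simp
    rw [hgover, ← mul_assoc]
    congr 1
    rw [← Real.rpow_neg_one t, ← Real.rpow_add ht]
    congr 1
    ring
  -- step 3 : binomial expansion pointwise
  have step3 : ∀ w ∈ Set.Ioi (0:ℝ), h w = ∑ k ∈ Finset.Icc 1 S,
      (S.choose k : ℝ) * (w ^ ((k:ℝ) - 2/α - 1) * (1+w) ^ (-(S:ℝ))) := by
    intro w hw
    have hw0 : (0:ℝ) < w := hw
    have h1w : (0:ℝ) < 1 + w := by linarith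
    have hpow : ((1:ℝ)+w) ^ (-(S:ℝ)) = (((1:ℝ)+w)^S)⁻¹ := by
      rw [Real.rpow_neg h1w.le, Real.rpow_natCast]
    have hbin : ((1:ℝ)+w)^S = ∑ k ∈ Finset.range (S+1), w^k * (S.choose k : ℝ) := by
      rw [add_comm (1:ℝ) w, add_pow]
      simp
    have hins : Finset.range (S+1) = insert 0 (Finset.Icc 1 S) := by
      ext k
      simp [Nat.lt_succ_iff, Nat.one_le_iff_ne_zero]
      omega
    have hsum : ((1:ℝ)+w)^S - 1 = ∑ k ∈ Finset.Icc 1 S, w^k * (S.choose k : ℝ) := by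
      rw [hbin, hins, Finset.sum_insert (by simp)]
      simp
    have hSne : ((1:ℝ)+w)^S ≠ 0 := by positivity
    rw [hh]
    dsimp only
    rw [hpow, show (1 : ℝ) - (((1:ℝ)+w)^S)⁻¹ = (((1:ℝ)+w)^S - 1) * (((1:ℝ)+w)^S)⁻¹ by
      field_simp]
    rw [hsum, Finset.sum_mul, Finset.sum_mul]
    apply Finset.sum_congr rfl
    intro k hk
    rw [← hpow, ← Real.rpow_natCast w k,
      show (w:ℝ)^((k:ℝ)) * (S.choose k:ℝ) * ((1:ℝ)+w)^(-(S:ℝ)) * w^(-2/α-1)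
        = (S.choose k:ℝ) * ((w^((k:ℝ)) * w^(-2/α-1)) * ((1:ℝ)+w)^(-(S:ℝ))) by ring,
      ← Real.rpow_add hw0]
    congr 3
    ring
  -- integrability of each term
  have hint : ∀ k ∈ Finset.Icc 1 S, IntegrableOn
      (fun w : ℝ => (S.choose k : ℝ) * (w ^ ((k:ℝ) - 2/α - 1) * (1+w) ^ (-(S:ℝ))))
      (Set.Ioi (0:ℝ)) := by
    intro k hk
    have hk1 : (1:ℝ) ≤ (k:ℝ) := by exact_mod_cast (Finset.mem_Icc.mp hk).1
    have hkS : (k:ℝ) ≤ (S:ℝ) := by exact_mod_cast (Finset.mem_Icc.mp hk).2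
    exact (integrableTerm ((k:ℝ) - 2/α - 1) (S:ℝ) (by linarith) (by positivity)
      (by linarith)).const_mul _
  -- step 4 : evaluate each beta integral
  have step4 : ∫ w in Set.Ioi (0:ℝ), h w = ∑ k ∈ Finset.Icc 1 S,
      (S.choose k : ℝ) * Real.Gamma ((k:ℝ) - 2 / α) *
        Real.Gamma ((S:ℝ) - (k:ℝ) + 2 / α) / Real.Gamma (S:ℝ) := by
    rw [setIntegral_congr_fun measurableSet_Ioi step3, integral_finset_sum _ hint]
    apply Finset.sum_congr rfl
    intro k hk
    rw [integral_const_mul]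
    have hk1 : (1:ℝ) ≤ (k:ℝ) := by exact_mod_cast (Finset.mem_Icc.mp hk).1
    have hkS : (k:ℝ) ≤ (S:ℝ) := by exact_mod_cast (Finset.mem_Icc.mp hk).2
    have ha : 0 < (k:ℝ) - 2/α := by linarith
    have hb : 0 < (S:ℝ) - (k:ℝ) + 2/α := by linarith
    have hab : ((k:ℝ) - 2/α) + ((S:ℝ) - (k:ℝ) + 2/α) = (S:ℝ) := by ring
    have hbeta := betaIoi ((k:ℝ) - 2/α) ((S:ℝ) - (k:ℝ) + 2/α) ha hb
    rw [hab] at hbeta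
    rw [hbeta]
    ring
  rw [step1, step2, step4]
  ring
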